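/- Suppose f₀, f₁ : ℝ × (0,∞) → ℝ are C² functions satisfying the first-order system ∂f₀/∂t = −c ∂f₀/∂η + (λ(t)/2)(f₁ − 2f₀) and ∂f₁/∂t = c ∂f₁/∂η + (λ(t)/2)(f₀ − 2f₁), with λ ∈ C¹. Then f = f₀ + f₁ satisfies ∂²f/∂t² + 2λ(t) ∂f/∂t + (1/2)((3/2)λ(t)² + λ'(t)) f = c² ∂²f/∂η². -/

import Mathlib

open Function

/-- Slice a function of two variables along the second coordinate. -/
private lemma hasDerivAt_sliceT {E : Type*} [NormedAddCommGroup E] [NormedSpace ℝ E]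
    {F : ℝ × ℝ → E} (hF : Differentiable ℝ F) (η t : ℝ) :
    HasDerivAt (fun s => F (η, s)) (fderiv ℝ F (η, t) (0, 1)) t :=
  (hF (η, t)).hasFDerivAt.comp_hasDerivAt t ((hasDerivAt_const t η).prodMk (hasDerivAt_id t))

/-- Slice a function of two variables along the first coordinate. -/
private lemma hasDerivAt_sliceH {E : Type*} [NormedAddCommGroup E] [NormedSpace ℝ E]
    {F : ℝ × ℝ → E} (hF : Differentiable ℝ F) (η t : ℝ) :
    HasDerivAt (fun z => F (z, t)) (fderiv ℝ F (η, t) (1, 0)) η :=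
  (hF (η, t)).hasFDerivAt.comp_hasDerivAt η ((hasDerivAt_id η).prodMk (hasDerivAt_const η t))

private lemma fderiv_diff {F : ℝ × ℝ → ℝ} (hF : ContDiff ℝ 2 F) :
    Differentiable ℝ (fderiv ℝ F) :=
  (hF.fderiv_right (m := 1) (by norm_num)).differentiable (by norm_num)

private lemma hasDerivAt_sliceT_fderiv {F : ℝ × ℝ → ℝ} (hF : ContDiff ℝ 2 F)
    (η t : ℝ) (w : ℝ × ℝ) :
    HasDerivAt (fun s => fderiv ℝ F (η, s) w)
      (fderiv ℝ (fderiv ℝ F) (η, t) (0, 1) w) t := by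
  have h := (hasDerivAt_sliceT (fderiv_diff hF) η t).clm_apply (hasDerivAt_const t w)
  simpa using h

private lemma hasDerivAt_sliceH_fderiv {F : ℝ × ℝ → ℝ} (hF : ContDiff ℝ 2 F)
    (η t : ℝ) (w : ℝ × ℝ) :
    HasDerivAt (fun z => fderiv ℝ F (z, t) w)
      (fderiv ℝ (fderiv ℝ F) (η, t) (1, 0) w) η := by
  have h := (hasDerivAt_sliceH (fderiv_diff hF) η t).clm_apply (hasDerivAt_const η w)
  simpa using h

private lemma symm2 {F : ℝ × ℝ → ℝ} (hF : ContDiff ℝ 2 F) (p : ℝ × ℝ) (v w : ℝ × ℝ) :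
    fderiv ℝ (fderiv ℝ F) p v w = fderiv ℝ (fderiv ℝ F) p w v := by
  have hd : Differentiable ℝ F := hF.differentiable (by norm_num)
  exact second_derivative_symmetric (fun y => (hd y).hasFDerivAt)
    (fderiv_diff hF p).hasFDerivAt v w

/-- If `f₀, f₁` solve the boundary system of the standard orthogonal planar motion,
then `f = f₀ + f₁` solves
`∂²f/∂t² + 2λ(t) ∂f/∂t + (1/2)((3/2)λ(t)² + λ'(t)) f = c² ∂²f/∂η²`. -/
theorem boundary_system_standard (c : ℝ)
    (f0 f1 : ℝ → ℝ → ℝ)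
    (hf0 : ContDiff ℝ 2 (Function.uncurry f0)) (hf1 : ContDiff ℝ 2 (Function.uncurry f1))
    (lam : ℝ → ℝ) (hlam : ContDiff ℝ 1 lam)
    (hsys0 : ∀ η t : ℝ, 0 < t →
      deriv (fun s => f0 η s) t
        = -c * deriv (fun z => f0 z t) η + lam t / 2 * (f1 η t - 2 * f0 η t))
    (hsys1 : ∀ η t : ℝ, 0 < t →
      deriv (fun s => f1 η s) t
        = c * deriv (fun z => f1 z t) η + lam t / 2 * (f0 η t - 2 * f1 η t)) :
    ∀ η t : ℝ, 0 < t →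
      deriv (fun s => deriv (fun s' => f0 η s' + f1 η s') s) t
          + 2 * lam t * deriv (fun s => f0 η s + f1 η s) t
          + 1 / 2 * (3 / 2 * lam t ^ 2 + deriv lam t) * (f0 η t + f1 η t)
        = c ^ 2 * deriv (fun z => deriv (fun z' => f0 z' t + f1 z' t) z) η := by
  intro η t ht
  set F0 : ℝ × ℝ → ℝ := Function.uncurry f0 with hF0
  set F1 : ℝ × ℝ → ℝ := Function.uncurry f1 with hF1
  have hd0 : Differentiable ℝ F0 := hf0.differentiable (by norm_num)
  have hd1 : Differentiable ℝ F1 := hf1.differentiable (by norm_num)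
  have hld : Differentiable ℝ lam := hlam.differentiable (by norm_num)
  -- slice derivatives as `HasDerivAt`, viewing f0 z s as F0 (z, s)
  have s0t : ∀ z s : ℝ, HasDerivAt (fun s' => f0 z s') (fderiv ℝ F0 (z, s) (0, 1)) s :=
    fun z s => hasDerivAt_sliceT hd0 z s
  have s0h : ∀ z s : ℝ, HasDerivAt (fun z' => f0 z' s) (fderiv ℝ F0 (z, s) (1, 0)) z :=
    fun z s => hasDerivAt_sliceH hd0 z s
  have s1t : ∀ z s : ℝ, HasDerivAt (fun s' => f1 z s') (fderiv ℝ F1 (z, s) (0, 1)) s :=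
    fun z s => hasDerivAt_sliceT hd1 z s
  have s1h : ∀ z s : ℝ, HasDerivAt (fun z' => f1 z' s) (fderiv ℝ F1 (z, s) (1, 0)) z :=
    fun z s => hasDerivAt_sliceH hd1 z s
  -- the system in fderiv form
  have E0 : ∀ z s : ℝ, 0 < s →
      fderiv ℝ F0 (z, s) (0, 1)
        = -c * fderiv ℝ F0 (z, s) (1, 0) + lam s / 2 * (f1 z s - 2 * f0 z s) := by
    intro z s hs
    rw [← (s0t z s).deriv, ← (s0h z s).deriv]
    exact hsys0 z s hs
  have E1 : ∀ z s : ℝ, 0 < s →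
      fderiv ℝ F1 (z, s) (0, 1)
        = c * fderiv ℝ F1 (z, s) (1, 0) + lam s / 2 * (f0 z s - 2 * f1 z s) := by
    intro z s hs
    rw [← (s1t z s).deriv, ← (s1h z s).deriv]
    exact hsys1 z s hs
  -- abbreviations for second derivatives
  set A : ℝ × ℝ →L[ℝ] ℝ × ℝ →L[ℝ] ℝ := fderiv ℝ (fderiv ℝ F0) (η, t) with hA
  set B : ℝ × ℝ →L[ℝ] ℝ × ℝ →L[ℝ] ℝ := fderiv ℝ (fderiv ℝ F1) (η, t) with hB
  have hpos : ∀ᶠ s in nhds t, 0 < s := eventually_gt_nhds ht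
  -- differentiate E0 in time
  have e3 : A (0, 1) (0, 1)
      = -c * A (0, 1) (1, 0)
        + (deriv lam t / 2 * (f1 η t - 2 * f0 η t)
            + lam t / 2 * (fderiv ℝ F1 (η, t) (0, 1) - 2 * fderiv ℝ F0 (η, t) (0, 1))) := by
    have hR : HasDerivAt
        (fun s => -c * fderiv ℝ F0 (η, s) (1, 0) + lam s / 2 * (f1 η s - 2 * f0 η s))
        (-c * (A (0, 1) (1, 0))
          + (deriv lam t / 2 * (f1 η t - 2 * f0 η t)
              + lam t / 2 * (fderiv ℝ F1 (η, t) (0, 1) - 2 * fderiv ℝ F0 (η, t) (0, 1)))) t := by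
      exact ((hasDerivAt_sliceT_fderiv hf0 η t (1, 0)).const_mul (-c)).add
        ((((hld t).hasDerivAt.div_const 2).mul ((s1t η t).sub ((s0t η t).const_mul 2))))
    have hev : (fun s => fderiv ℝ F0 (η, s) (0, 1))
        =ᶠ[nhds t] (fun s => -c * fderiv ℝ F0 (η, s) (1, 0) + lam s / 2 * (f1 η s - 2 * f0 η s)) := by
      filter_upwards [hpos] with s hs using E0 η s hs
    exact (hasDerivAt_sliceT_fderiv hf0 η t (0, 1)).unique (hR.congr_of_eventuallyEq hev)
  -- differentiate E1 in time
  have e5 : B (0, 1) (0, 1)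
      = c * B (0, 1) (1, 0)
        + (deriv lam t / 2 * (f0 η t - 2 * f1 η t)
            + lam t / 2 * (fderiv ℝ F0 (η, t) (0, 1) - 2 * fderiv ℝ F1 (η, t) (0, 1))) := by
    have hR : HasDerivAt
        (fun s => c * fderiv ℝ F1 (η, s) (1, 0) + lam s / 2 * (f0 η s - 2 * f1 η s))
        (c * (B (0, 1) (1, 0))
          + (deriv lam t / 2 * (f0 η t - 2 * f1 η t)
              + lam t / 2 * (fderiv ℝ F0 (η, t) (0, 1) - 2 * fderiv ℝ F1 (η, t) (0, 1)))) t := by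
      exact ((hasDerivAt_sliceT_fderiv hf1 η t (1, 0)).const_mul c).add
        ((((hld t).hasDerivAt.div_const 2).mul ((s0t η t).sub ((s1t η t).const_mul 2))))
    have hev : (fun s => fderiv ℝ F1 (η, s) (0, 1))
        =ᶠ[nhds t] (fun s => c * fderiv ℝ F1 (η, s) (1, 0) + lam s / 2 * (f0 η s - 2 * f1 η s)) := by
      filter_upwards [hpos] with s hs using E1 η s hs
    exact (hasDerivAt_sliceT_fderiv hf1 η t (0, 1)).unique (hR.congr_of_eventuallyEq hev)
  -- differentiate E0 in space
  have e4 : A (1, 0) (0, 1)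
      = -c * A (1, 0) (1, 0)
        + lam t / 2 * (fderiv ℝ F1 (η, t) (1, 0) - 2 * fderiv ℝ F0 (η, t) (1, 0)) := by
    have hR : HasDerivAt
        (fun z => -c * fderiv ℝ F0 (z, t) (1, 0) + lam t / 2 * (f1 z t - 2 * f0 z t))
        (-c * (A (1, 0) (1, 0))
          + lam t / 2 * (fderiv ℝ F1 (η, t) (1, 0) - 2 * fderiv ℝ F0 (η, t) (1, 0))) η := by
      exact ((hasDerivAt_sliceH_fderiv hf0 η t (1, 0)).const_mul (-c)).add
        (((s1h η t).sub ((s0h η t).const_mul 2)).const_mul (lam t / 2))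
    have hev : (fun z => fderiv ℝ F0 (z, t) (0, 1))
        = (fun z => -c * fderiv ℝ F0 (z, t) (1, 0) + lam t / 2 * (f1 z t - 2 * f0 z t)) :=
      funext fun z => E0 z t ht
    exact (hasDerivAt_sliceH_fderiv hf0 η t (0, 1)).unique (hev ▸ hR)
  -- differentiate E1 in space
  have e6 : B (1, 0) (0, 1)
      = c * B (1, 0) (1, 0)
        + lam t / 2 * (fderiv ℝ F0 (η, t) (1, 0) - 2 * fderiv ℝ F1 (η, t) (1, 0)) := by
    have hR : HasDerivAt
        (fun z => c * fderiv ℝ F1 (z, t) (1, 0) + lam t / 2 * (f0 z t - 2 * f1 z t))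
        (c * (B (1, 0) (1, 0))
          + lam t / 2 * (fderiv ℝ F0 (η, t) (1, 0) - 2 * fderiv ℝ F1 (η, t) (1, 0))) η := by
      exact ((hasDerivAt_sliceH_fderiv hf1 η t (1, 0)).const_mul c).add
        (((s0h η t).sub ((s1h η t).const_mul 2)).const_mul (lam t / 2))
    have hev : (fun z => fderiv ℝ F1 (z, t) (0, 1))
        = (fun z => c * fderiv ℝ F1 (z, t) (1, 0) + lam t / 2 * (f0 z t - 2 * f1 z t)) :=
      funext fun z => E1 z t ht
    exact (hasDerivAt_sliceH_fderiv hf1 η t (0, 1)).unique (hev ▸ hR)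
  -- symmetry of second derivatives
  have sA : A (0, 1) (1, 0) = A (1, 0) (0, 1) := symm2 hf0 (η, t) _ _
  have sB : B (0, 1) (1, 0) = B (1, 0) (0, 1) := symm2 hf1 (η, t) _ _
  -- rewrite the goal in fderiv form
  have g1 : deriv (fun s => deriv (fun s' => f0 η s' + f1 η s') s) t
      = A (0, 1) (0, 1) + B (0, 1) (0, 1) := by
    have hfun : (fun s => deriv (fun s' => f0 η s' + f1 η s') s)
        = fun s => fderiv ℝ F0 (η, s) (0, 1) + fderiv ℝ F1 (η, s) (0, 1) :=
      funext fun s => ((s0t η s).add (s1t η s)).deriv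
    rw [hfun]
    exact ((hasDerivAt_sliceT_fderiv hf0 η t (0, 1)).add
      (hasDerivAt_sliceT_fderiv hf1 η t (0, 1))).deriv
  have g2 : deriv (fun s => f0 η s + f1 η s) t
      = fderiv ℝ F0 (η, t) (0, 1) + fderiv ℝ F1 (η, t) (0, 1) :=
    ((s0t η t).add (s1t η t)).deriv
  have g3 : deriv (fun z => deriv (fun z' => f0 z' t + f1 z' t) z) η
      = A (1, 0) (1, 0) + B (1, 0) (1, 0) := by
    have hfun : (fun z => deriv (fun z' => f0 z' t + f1 z' t) z)
        = fun z => fderiv ℝ F0 (z, t) (1, 0) + fderiv ℝ F1 (z, t) (1, 0) :=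
      funext fun z => ((s0h z t).add (s1h z t)).deriv
    rw [hfun]
    exact ((hasDerivAt_sliceH_fderiv hf0 η t (1, 0)).add
      (hasDerivAt_sliceH_fderiv hf1 η t (1, 0))).deriv
  rw [g1, g2, g3]
  have E0pt := E0 η t ht
  have E1pt := E1 η t ht
  linear_combination e3 + e5 - c * sA + c * sB - c * e4 + c * e6
    + 3 / 2 * lam t * E0pt + 3 / 2 * lam t * E1pt
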